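/- A disconnected joint type space all of whose slices are connected: let n ≥ 2, and let L, H ∈ ℝ and ε > 0 satisfy L + ε < H − ε. Define Θ = {v ∈ ℝ^n : v_i ∈ [H−ε, H+ε] for all i} ∪ {v ∈ ℝ^n : v_i ∈ [L−ε, L+ε] for all i}. Then Θ is not a connected subset of ℝ^n, but for every agent i and every v_{-i} ∈ Θ_{-i}, the slice Θ_i(v_{-i}) = {v_i ∈ ℝ : (v_i, v_{-i}) ∈ Θ} is a connected subset of ℝ. -/

import Mathlib

/-- A disconnected joint type space all of whose slices are connected. -/
theorem disconnected_joint_space_connected_slices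
    (n : ℕ) (hn : 2 ≤ n) (L H ε : ℝ) (hε : 0 < ε) (hLH : L + ε < H - ε)
    (Θ : Set (Fin n → ℝ))
    (hΘ : Θ = {v | ∀ i, v i ∈ Set.Icc (H - ε) (H + ε)}
            ∪ {v | ∀ i, v i ∈ Set.Icc (L - ε) (L + ε)}) :
    ¬ IsConnected Θ ∧
      ∀ (i : Fin n) (v : Fin n → ℝ),
        ({x : ℝ | Function.update v i x ∈ Θ}).Nonempty →
        IsConnected {x : ℝ | Function.update v i x ∈ Θ} := by
  constructor
  · rintro ⟨-, hconn⟩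
    have h0 : (0 : ℕ) < n := by omega
    set u : Set (Fin n → ℝ) := {v | L + ε < v ⟨0, h0⟩} with hu
    set w : Set (Fin n → ℝ) := {v | v ⟨0, h0⟩ < H - ε} with hw
    have hou : IsOpen u := isOpen_lt continuous_const (continuous_apply _)
    have how : IsOpen w := isOpen_lt (continuous_apply _) continuous_const
    have hcover : Θ ⊆ u ∪ w := by
      rw [hΘ]
      rintro v (hv | hv)
      · left
        have := (hv ⟨0, h0⟩).1
        simp only [hu, Set.mem_setOf_eq]
        linarith
      · right
        have := (hv ⟨0, h0⟩).2
        simp only [hw, Set.mem_setOf_eq]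
        linarith
    have hu' : (Θ ∩ u).Nonempty := by
      refine ⟨fun _ => H, ?_, ?_⟩
      · rw [hΘ]; left; intro i; constructor <;> linarith
      · simp only [hu, Set.mem_setOf_eq]; linarith
    have hw' : (Θ ∩ w).Nonempty := by
      refine ⟨fun _ => L, ?_, ?_⟩
      · rw [hΘ]; right; intro i; constructor <;> linarith
      · simp only [hw, Set.mem_setOf_eq]; linarith
    obtain ⟨v, hvΘ, hvu, hvw⟩ := hconn u w hou how hcover hu' hw'
    rw [hΘ] at hvΘ
    simp only [hu, hw, Set.mem_setOf_eq] at hvu hvw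
    rcases hvΘ with hv | hv
    · have := (hv ⟨0, h0⟩).1; linarith
    · have := (hv ⟨0, h0⟩).2; linarith
  · intro i v ⟨x0, hx0⟩
    obtain ⟨j, hji⟩ := Fintype.exists_ne_of_one_lt_card (by rw [Fintype.card_fin]; omega) i
    simp only [Set.mem_setOf_eq, hΘ, Set.mem_union] at hx0
    have key : ∀ a b, Function.update v i a ∈ ({w | ∀ k, w k ∈ Set.Icc (H - ε) (H + ε)} : Set (Fin n → ℝ)) →
        Function.update v i b ∈ ({w | ∀ k, w k ∈ Set.Icc (L - ε) (L + ε)} : Set (Fin n → ℝ)) → False := by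
      intro a b ha hb
      have h1 := ha j
      have h2 := hb j
      rw [Function.update_of_ne hji] at h1 h2
      have := h1.1
      have := h2.2
      linarith
    rcases hx0 with hx0 | hx0
    · have heq : {x : ℝ | Function.update v i x ∈ Θ} = Set.Icc (H - ε) (H + ε) := by
        ext x
        simp only [Set.mem_setOf_eq, hΘ, Set.mem_union]
        constructor
        · rintro (hx | hx)
          · have := hx i; rwa [Function.update_self] at this
          · exact absurd (key x0 x hx0 hx) (fun h => h)
        · intro hx
          left
          intro k
          rcases eq_or_ne k i with rfl | hk
          · rwa [Function.update_self]
          · rw [Function.update_of_ne hk]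
            have := hx0 k
            rwa [Function.update_of_ne hk] at this
      rw [heq]
      exact isConnected_Icc (by linarith)
    · have heq : {x : ℝ | Function.update v i x ∈ Θ} = Set.Icc (L - ε) (L + ε) := by
        ext x
        simp only [Set.mem_setOf_eq, hΘ, Set.mem_union]
        constructor
        · rintro (hx | hx)
          · exact absurd (key x x0 hx hx0) (fun h => h)
          · have := hx i; rwa [Function.update_self] at this
        · intro hx
          right
          intro k
          rcases eq_or_ne k i with rfl | hk
          · rwa [Function.update_self]
          · rw [Function.update_of_ne hk]
            have := hx0 k
            rwa [Function.update_of_ne hk] at this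
      rw [heq]
      exact isConnected_Icc (by linarith)
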